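/- For S ⊆ ℕ^ℕ: S is guessable if and only if S_∞ = ∅. Equivalently (given Wadge's theorem that guessable = Δ⁰₂), S ∈ Δ⁰₂ if and only if S_∞ = ∅. -/

import Mathlib

open Filter Topology Classical

/-- The initial segment `f↾n` of an infinite sequence. -/
def res (f : ℕ → ℕ) (n : ℕ) : List ℕ := List.ofFn (fun i : Fin n => f i)

/-- `[X]`: the set of infinite sequences all of whose finite initial segments lie in `X`. -/
def seqsIn (X : Set (List ℕ)) : Set (ℕ → ℕ) := {f | ∀ n, res f n ∈ X}

/-- The simplified remainder `S_α`. -/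
noncomputable def SRem (S : Set (ℕ → ℕ)) (α : Ordinal.{0}) : Set (List ℕ) :=
  Ordinal.limitRecOn α Set.univ
    (fun _ prev => {x | x ∈ prev ∧ ∃ f g : ℕ → ℕ,
      f ∈ seqsIn prev ∧ g ∈ seqsIn prev ∧ res f x.length = x ∧ res g x.length = x ∧
      f ∈ S ∧ g ∉ S})
    (fun _ _ ih => ⋂ (β : Ordinal.{0}) (h : β < _), ih β h)

/-- Wadge's remainder `Rm_μ(A,B)`. -/
noncomputable def Rm (A B : Set (ℕ → ℕ)) (μ : Ordinal.{0}) : Set (ℕ → ℕ) :=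
  if μ = 0 then Set.univ
  else ⋂ (ν : {ν : Ordinal.{0} // ν < μ}),
    closure (Rm A B ν.1 ∩ A) ∩ closure (Rm A B ν.1 ∩ B)
termination_by μ
decreasing_by exact ν.2

/-- The least ordinal at which the simplified remainders stabilize. -/
noncomputable def alphaS (S : Set (ℕ → ℕ)) : Ordinal.{0} :=
  sInf {α | SRem S α = SRem S (α + 1)}

/-- `S_∞`, the stable value of the simplified remainders. -/
noncomputable def Sinf (S : Set (ℕ → ℕ)) : Set (List ℕ) := SRem S (alphaS S)

/-- `β(σ)`: the least ordinal `γ` with `σ ∉ S_γ`. -/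
noncomputable def betaOf (S : Set (ℕ → ℕ)) (σ : List ℕ) : Ordinal.{0} :=
  sInf {γ | σ ∉ SRem S γ}

/-- `G` guesses `S`. -/
def Guesses (G : List ℕ → Bool) (S : Set (ℕ → ℕ)) : Prop :=
  ∀ f : ℕ → ℕ, ∀ᶠ n in atTop, (G (res f n) = true ↔ f ∈ S)

def Guessable (S : Set (ℕ → ℕ)) : Prop := ∃ G, Guesses G S

/-- `G, H` witness that `S` is guessable with `< α` mind changes. -/
def WitnessMC (S : Set (ℕ → ℕ)) (α : Ordinal.{0}) (G : List ℕ → Bool)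
    (H : List ℕ → Ordinal.{0}) : Prop :=
  Guesses G S ∧ (∀ σ, H σ < α) ∧
  (∀ (f : ℕ → ℕ) (n : ℕ), H (res f (n + 1)) ≤ H (res f n)) ∧
  (∀ (f : ℕ → ℕ) (n : ℕ), G (res f (n + 1)) ≠ G (res f n) →
    H (res f (n + 1)) < H (res f n))

def GuessableMC (S : Set (ℕ → ℕ)) (α : Ordinal.{0}) : Prop := ∃ G H, WitnessMC S α G H

/-- An ordinal is even if it is of the form `λ + n` with `λ` limit or zero and `n` even. -/
def OrdEven (o : Ordinal.{0}) : Prop :=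
  ∃ (l : Ordinal.{0}) (n : ℕ), (l = 0 ∨ Order.IsSuccLimit l) ∧ o = l + n ∧ Even n

/-- The Hausdorff difference set `D_α((A_η)_{η<α})`. -/
def DSet (α : Ordinal.{0}) (A : Ordinal.{0} → Set (ℕ → ℕ)) : Set (ℕ → ℕ) :=
  {x | ∃ η, η < α ∧ x ∈ A η ∧ (∀ η', η' < η → x ∉ A η') ∧ (OrdEven η ↔ ¬ OrdEven α)}

/-- Membership in the class `D_α(Σ⁰₁)`. -/
def InDiff (α : Ordinal.{0}) (S : Set (ℕ → ℕ)) : Prop :=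
  ∃ A : Ordinal.{0} → Set (ℕ → ℕ), (∀ η, η < α → IsOpen (A η)) ∧
    (∀ η η', η ≤ η' → η' < α → A η ⊆ A η') ∧ S = DSet α A
/-- Wadge's `Rm_Ω(S)`: the stable value of `Rm_μ(S, Sᶜ)`. -/
noncomputable def RmInf (S : Set (ℕ → ℕ)) : Set (ℕ → ℕ) :=
  Rm S Sᶜ (sInf {μ : Ordinal.{0} | Rm S Sᶜ μ = Rm S Sᶜ (μ + 1)})

/-- The canonical guesser `G_S`. -/
noncomputable def GS (S : Set (ℕ → ℕ)) (σ : List ℕ) : Bool :=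
  if (∃ f : ℕ → ℕ, res f σ.length = σ ∧ f ∈ seqsIn (SRem S (betaOf S σ - 1))) then
    decide (∃ f : ℕ → ℕ, res f σ.length = σ ∧ f ∈ seqsIn (SRem S (betaOf S σ - 1)) ∧ f ∈ S)
  else if h : σ = [] then false
  else GS S σ.dropLast
termination_by σ.length
decreasing_by
  simp only [List.length_dropLast]
  exact Nat.sub_lt (List.length_pos_iff.mpr h) one_pos

/-- `S` is `F_σ`: a countable union of closed sets. -/
def IsFsigma (S : Set (ℕ → ℕ)) : Prop :=
  ∃ C : ℕ → Set (ℕ → ℕ), (∀ n, IsClosed (C n)) ∧ S = ⋃ n, C n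

/-- Boolean combinations of open sets. -/
inductive BoolComb : Set (ℕ → ℕ) → Prop
  | isOpen {s : Set (ℕ → ℕ)} : IsOpen s → BoolComb s
  | compl {s : Set (ℕ → ℕ)} : BoolComb s → BoolComb sᶜ
  | union {s t : Set (ℕ → ℕ)} : BoolComb s → BoolComb t → BoolComb (s ∪ t)

/-- The Borel class `Σ⁰_α` on Baire space (for `α ≥ 1`). -/
noncomputable def Sigma0 (α : Ordinal.{0}) : Set (Set (ℕ → ℕ)) :=
  if α = 1 then {s | IsOpen s}
  else {s | ∃ g : ℕ → Set (ℕ → ℕ), s = ⋃ n, g n ∧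
    ∀ n, ∃ β : {β : Ordinal.{0} // β < α}, 1 ≤ β.1 ∧ (g n)ᶜ ∈ Sigma0 β.1}
termination_by α
decreasing_by exact β.2

/-- The ambiguous Borel class `Δ⁰_α`. -/
noncomputable def Delta0 (α : Ordinal.{0}) : Set (Set (ℕ → ℕ)) :=
  {s | s ∈ Sigma0 α ∧ sᶜ ∈ Sigma0 α}

/-- The Boolean characteristic function. -/
noncomputable def chi (X : Set (ℕ → ℕ)) (f : ℕ → ℕ) : Bool := decide (f ∈ X)

/-- `G` guesses `S` based on the sequence of sets `Ss`. -/
def GuessesBased (G : List Bool → Bool) (Ss : ℕ → Set (ℕ → ℕ)) (S : Set (ℕ → ℕ)) : Prop :=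
  ∀ f : ℕ → ℕ, ∀ᶠ n in atTop,
    (G (List.ofFn (fun i : Fin n => chi (Ss i) f)) = true ↔ f ∈ S)

/-- `S` is `μ`th-order guessable. -/
def HigherGuessable (μ : Ordinal.{0}) (S : Set (ℕ → ℕ)) : Prop :=
  ∃ Ss : ℕ → Set (ℕ → ℕ), (∀ i, ∃ μi, μi < μ ∧ Ss i ∈ Delta0 (μi + 1)) ∧
    ∃ G : List Bool → Bool, GuessesBased G Ss S

@[simp] lemma res_length (f : ℕ → ℕ) (n : ℕ) : (res f n).length = n := by
  simp [res]

lemma res_eq_iff {f g : ℕ → ℕ} {n : ℕ} : res f n = res g n ↔ ∀ i < n, f i = g i := by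
  constructor
  · intro h i hi
    have := congrArg (fun l => l[i]?) h
    simpa [res, List.getElem?_ofFn, hi] using this
  · intro h
    simp only [res]
    congr 1
    ext i
    exact h i i.2

lemma res_eq_of_le {f g : ℕ → ℕ} {m n : ℕ} (hmn : m ≤ n) (h : res f n = res g n) :
    res f m = res g m := by
  rw [res_eq_iff] at h ⊢
  exact fun i hi => h i (lt_of_lt_of_le hi hmn)

lemma SRem_zero (S : Set (ℕ → ℕ)) : SRem S 0 = Set.univ :=
  Ordinal.limitRecOn_zero _ _ _

lemma SRem_succ (S : Set (ℕ → ℕ)) (β : Ordinal.{0}) :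
    SRem S (β + 1) = {x | x ∈ SRem S β ∧ ∃ f g : ℕ → ℕ,
      f ∈ seqsIn (SRem S β) ∧ g ∈ seqsIn (SRem S β) ∧ res f x.length = x ∧ res g x.length = x ∧
      f ∈ S ∧ g ∉ S} := by
  rw [SRem, Ordinal.add_one_eq_succ, Ordinal.limitRecOn_succ]
  rfl

lemma SRem_limit (S : Set (ℕ → ℕ)) {l : Ordinal.{0}} (hl : Order.IsSuccLimit l) :
    SRem S l = ⋂ (β : Ordinal.{0}) (_ : β < l), SRem S β := by
  rw [SRem, Ordinal.limitRecOn_limit _ _ _ _ hl]; rfl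

lemma SRem_succ_subset (S : Set (ℕ → ℕ)) (β : Ordinal.{0}) : SRem S (β + 1) ⊆ SRem S β := by
  rw [SRem_succ]; exact fun x hx => hx.1

lemma SRem_antitone (S : Set (ℕ → ℕ)) : ∀ {γ δ : Ordinal.{0}}, γ ≤ δ → SRem S δ ⊆ SRem S γ := by
  intro γ δ
  induction δ using Ordinal.induction generalizing γ with
  | h δ IH =>
    intro hγδ
    rcases eq_or_lt_of_le hγδ with rfl | hlt
    · exact subset_rfl
    rcases Ordinal.zero_or_succ_or_isSuccLimit δ with rfl | ⟨β, rfl⟩ | hl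
    · exact absurd hlt (not_lt_zero (a := γ))
    · have h1 : γ ≤ β := Order.lt_succ_iff.mp hlt
      have h2 : SRem S (Order.succ β) ⊆ SRem S β := by
        rw [← Ordinal.add_one_eq_succ]; exact SRem_succ_subset S β
      exact (IH β (Order.lt_succ β) h1).trans' h2
    · rw [SRem_limit S hl]
      exact Set.iInter₂_subset γ hlt

lemma SRem_tree (S : Set (ℕ → ℕ)) (γ : Ordinal.{0}) :
    ∀ (f : ℕ → ℕ) (m n : ℕ), m ≤ n → res f n ∈ SRem S γ → res f m ∈ SRem S γ := by
  induction γ using Ordinal.induction with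
  | h γ IH =>
    intro f m n hmn hn
    rcases Ordinal.zero_or_succ_or_isSuccLimit γ with rfl | ⟨β, rfl⟩ | hl
    · rw [SRem_zero]; trivial
    · rw [← Ordinal.add_one_eq_succ] at hn ⊢
      rw [SRem_succ] at hn ⊢
      obtain ⟨hmem, g, h, hg, hh, hgr, hhr, hgS, hhS⟩ := hn
      rw [res_length] at hgr hhr
      refine ⟨IH β (Order.lt_succ β) f m n hmn hmem, g, h, hg, hh, ?_, ?_, hgS, hhS⟩
      · rw [res_length]; exact res_eq_of_le hmn hgr
      · rw [res_length]; exact res_eq_of_le hmn hhr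
    · rw [SRem_limit S hl] at hn ⊢
      simp only [Set.mem_iInter] at hn ⊢
      exact fun β hβ => IH β hβ f m n hmn (hn β hβ)

lemma SRem_stab_nonempty (S : Set (ℕ → ℕ)) :
    {α : Ordinal.{0} | SRem S α = SRem S (α + 1)}.Nonempty := by
  by_contra hne
  rw [Set.not_nonempty_iff_eq_empty] at hne
  have hstrict : ∀ α : Ordinal.{0}, ∃ σ, σ ∈ SRem S α ∧ σ ∉ SRem S (α + 1) := by
    intro α
    have h1 : SRem S α ≠ SRem S (α + 1) := by
      intro h; exact absurd (Set.eq_empty_iff_forall_notMem.mp hne α) (fun h2 => h2 h)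
    have h2 : SRem S (α + 1) ⊆ SRem S α := SRem_succ_subset S α
    rcases Set.exists_of_ssubset (h2.ssubset_of_ne (fun h => h1 h.symm)) with ⟨σ, h3, h4⟩
    exact ⟨σ, h3, h4⟩
  choose c hc1 hc2 using hstrict
  have hinj : Function.Injective c := by
    intro a b hab
    by_contra hne'
    rcases lt_or_gt_of_ne hne' with h | h
    · exact hc2 a (SRem_antitone S (Order.add_one_le_of_lt h) (hab ▸ hc1 b))
    · exact hc2 b (SRem_antitone S (Order.add_one_le_of_lt h) (hab ▸ hc1 a))
  exact not_small_ordinal.{0} (small_of_injective hinj)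

section Guessing

variable {S : Set (ℕ → ℕ)}

lemma betaOf_spec (hA : Sinf S = ∅) (σ : List ℕ) : σ ∉ SRem S (betaOf S σ) := by
  have hne : {γ : Ordinal.{0} | σ ∉ SRem S γ}.Nonempty := by
    refine ⟨alphaS S, ?_⟩
    have h2 : SRem S (alphaS S) = ∅ := hA
    simp [Set.mem_setOf_eq, h2]
  exact csInf_mem hne

lemma betaOf_lt_mem {σ : List ℕ} {γ : Ordinal.{0}} (h : γ < betaOf S σ) : σ ∈ SRem S γ := by
  by_contra hc
  have hle : betaOf S σ ≤ γ := csInf_le (OrderBot.bddBelow _) hc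
  exact absurd hle (not_le_of_gt h)

lemma lt_betaOf_of_mem (hA : Sinf S = ∅) {σ : List ℕ} {γ : Ordinal.{0}}
    (h : σ ∈ SRem S γ) : γ < betaOf S σ := by
  by_contra hc
  push_neg at hc
  exact betaOf_spec hA σ (SRem_antitone S hc h)

lemma betaOf_eq_succ (hA : Sinf S = ∅) (σ : List ℕ) :
    ∃ γ : Ordinal.{0}, betaOf S σ = γ + 1 := by
  have hmem := betaOf_spec hA σ
  rcases Ordinal.zero_or_succ_or_isSuccLimit (betaOf S σ) with h0 | ⟨δ, hδ⟩ | hl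
  · exfalso; rw [h0, SRem_zero] at hmem; exact hmem trivial
  · exact ⟨δ, by rw [← hδ, Ordinal.add_one_eq_succ]⟩
  · exfalso
    rw [SRem_limit S hl] at hmem
    simp only [Set.mem_iInter] at hmem
    push_neg at hmem
    obtain ⟨γ, hγ, hg⟩ := hmem
    exact hg (betaOf_lt_mem hγ)

lemma betaOf_antitone (hA : Sinf S = ∅) (f : ℕ → ℕ) {m n : ℕ} (hmn : m ≤ n) :
    betaOf S (res f n) ≤ betaOf S (res f m) := by
  apply csInf_le (OrderBot.bddBelow _)
  intro hc
  exact betaOf_spec hA (res f m) (SRem_tree S _ f m n hmn hc)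

lemma betaOf_eventually (hA : Sinf S = ∅) (f : ℕ → ℕ) :
    ∃ N : ℕ, ∃ γ : Ordinal.{0}, ∀ n, N ≤ n → betaOf S (res f n) = γ + 1 := by
  have hrne : (Set.range fun n => betaOf S (res f n)).Nonempty := Set.range_nonempty _
  obtain ⟨N, hN⟩ := csInf_mem hrne
  obtain ⟨γ, hγ⟩ := betaOf_eq_succ hA (res f N)
  refine ⟨N, γ, fun n hn => ?_⟩
  rw [← hγ]
  refine le_antisymm (betaOf_antitone hA f hn) ?_
  have h1 : betaOf S (res f N) = sInf (Set.range fun n => betaOf S (res f n)) := hN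
  rw [h1]
  exact csInf_le (OrderBot.bddBelow _) ⟨n, rfl⟩

/-- Our explicit guesser. -/
noncomputable def myG (S : Set (ℕ → ℕ)) (σ : List ℕ) : Bool :=
  decide (∃ γ : Ordinal.{0}, σ ∈ SRem S γ ∧ σ ∉ SRem S (γ + 1) ∧
    ∃ g : ℕ → ℕ, res g σ.length = σ ∧ g ∈ seqsIn (SRem S γ) ∧ g ∈ S)

lemma guesses_of_Sinf_empty (hA : Sinf S = ∅) : Guesses (myG S) S := by
  intro f
  obtain ⟨N, γ, hall⟩ := betaOf_eventually hA f
  have hmemγ : ∀ n, N ≤ n → res f n ∈ SRem S γ := fun n hn =>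
    betaOf_lt_mem (by rw [hall n hn]; exact lt_add_one γ)
  have hfγ : f ∈ seqsIn (SRem S γ) := by
    intro m
    rcases le_total m N with h | h
    · exact SRem_tree S γ f m N h (hmemγ N le_rfl)
    · exact hmemγ m h
  have hnot : ∀ n, N ≤ n → res f n ∉ SRem S (γ + 1) := fun n hn => by
    rw [← hall n hn]; exact betaOf_spec hA (res f n)
  rw [eventually_atTop]
  refine ⟨N, fun n hn => ?_⟩
  rw [myG, decide_eq_true_eq]
  constructor
  · rintro ⟨γ', hσγ', hσγ'1, g, hgr, hgmem, hgS⟩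
    -- uniqueness: γ' = γ
    have h1 : γ' < betaOf S (res f n) := lt_betaOf_of_mem hA hσγ'
    have h2 : betaOf S (res f n) ≤ γ' + 1 := csInf_le (OrderBot.bddBelow _) hσγ'1
    rw [hall n hn] at h1 h2
    have hγeq : γ' = γ := le_antisymm (Order.lt_succ_iff.mp (by
        rw [← Ordinal.add_one_eq_succ]; exact h1))
      (Order.lt_succ_iff.mp (by
        rw [← Ordinal.add_one_eq_succ]
        exact lt_of_lt_of_le (lt_add_one γ) h2))
    subst hγeq
    by_contra hfS
    apply hnot n hn
    rw [SRem_succ]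
    refine ⟨hmemγ n hn, g, f, hgmem, hfγ, hgr, by rw [res_length], hgS, hfS⟩
  · intro hfS
    exact ⟨γ, hmemγ n hn, hnot n hn, f, by rw [res_length], hfγ, hfS⟩

lemma guessable_of_Sinf_empty (hA : Sinf S = ∅) : Guessable S :=
  ⟨myG S, guesses_of_Sinf_empty hA⟩

end Guessing

section DeltaTwo

variable {S : Set (ℕ → ℕ)}

/-- Any set determined by the first `n` values is open. -/
lemma isOpen_res_set (P : List ℕ → Prop) (n : ℕ) : IsOpen {f : ℕ → ℕ | P (res f n)} := by
  have h : {f : ℕ → ℕ | P (res f n)} =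
      ⋃ f ∈ {f : ℕ → ℕ | P (res f n)}, PiNat.cylinder f n := by
    ext g
    simp only [Set.mem_iUnion, Set.mem_setOf_eq]
    constructor
    · intro hg; exact ⟨g, hg, PiNat.self_mem_cylinder g n⟩
    · rintro ⟨f, hf, hgf⟩
      have he : res g n = res f n := res_eq_iff.mpr (fun i hi => hgf i hi)
      show P (res g n)
      rw [he]; exact hf
  rw [h]
  exact isOpen_biUnion fun f _ => PiNat.isOpen_cylinder _ f n

lemma isClosed_res_set (P : List ℕ → Prop) (n : ℕ) : IsClosed {f : ℕ → ℕ | P (res f n)} := by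
  rw [← isOpen_compl_iff]
  exact isOpen_res_set (fun l => ¬ P l) n

lemma isFsigma_of_guesses {G : List ℕ → Bool} (hG : Guesses G S) : IsFsigma S := by
  refine ⟨fun N => ⋂ n, {f : ℕ → ℕ | G (res f (N + n)) = true}, fun N =>
    isClosed_iInter fun n => isClosed_res_set (fun l => G l = true) (N + n), ?_⟩
  ext f
  simp only [Set.mem_iUnion, Set.mem_iInter, Set.mem_setOf_eq]
  constructor
  · intro hf
    obtain ⟨N, hN⟩ := eventually_atTop.mp (hG f)
    exact ⟨N, fun n => (hN (N + n) (Nat.le_add_right N n)).mpr hf⟩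
  · rintro ⟨N, hN⟩
    obtain ⟨M, hM⟩ := eventually_atTop.mp (hG f)
    have := hN (M + N - N + (M - M))
    have h1 : N + (M + N - N + (M - M)) = M + N := by omega
    rw [h1] at this
    exact (hM (M + N) (Nat.le_add_right M N)).mp this

lemma guesses_compl {G : List ℕ → Bool} (hG : Guesses G S) :
    Guesses (fun σ => !G σ) Sᶜ := by
  intro f
  filter_upwards [hG f] with n hn
  simp only [Bool.not_eq_true', ← Bool.not_eq_true]
  rw [hn]
  simp [Set.mem_compl_iff]

lemma isGδ_of_isFsigma_compl (h : IsFsigma Sᶜ) : IsGδ S := by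
  obtain ⟨C, hC, hCS⟩ := h
  have : S = ⋂ n, (C n)ᶜ := by
    rw [← Set.compl_iUnion, ← hCS, compl_compl]
  rw [this]
  exact IsGδ.iInter_of_isOpen fun n => (hC n).isOpen_compl

lemma delta2_of_guessable (h : Guessable S) : IsGδ S ∧ IsFsigma S := by
  obtain ⟨G, hG⟩ := h
  exact ⟨isGδ_of_isFsigma_compl (by
    simpa using isFsigma_of_guesses (guesses_compl hG)),
    isFsigma_of_guesses hG⟩

end DeltaTwo

section Baire

variable {S : Set (ℕ → ℕ)}

lemma isGδ_preimage {X Y : Type*} [TopologicalSpace X] [TopologicalSpace Y] {s : Set Y}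
    (hs : IsGδ s) {f : X → Y} (hf : Continuous f) : IsGδ (f ⁻¹' s) := by
  obtain ⟨T, hT, hTc, rfl⟩ := hs
  rw [Set.preimage_sInter]
  exact IsGδ.biInter hTc fun t ht => ((hT t ht).preimage hf).isGδ

lemma isClosed_seqsIn (X : Set (List ℕ)) : IsClosed (seqsIn X) := by
  have h : seqsIn X = ⋂ n, {f : ℕ → ℕ | res f n ∈ X} := by
    ext f; simp [seqsIn, Set.mem_iInter]
  rw [h]
  exact isClosed_iInter fun n => isClosed_res_set (fun l => l ∈ X) n

lemma Sinf_fixed (S : Set (ℕ → ℕ)) : Sinf S = SRem S (alphaS S + 1) := by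
  have h := csInf_mem (SRem_stab_nonempty S)
  exact h

lemma Sinf_extend {σ : List ℕ} (hσ : σ ∈ Sinf S) :
    ∃ f g : ℕ → ℕ, f ∈ seqsIn (Sinf S) ∧ g ∈ seqsIn (Sinf S) ∧
      res f σ.length = σ ∧ res g σ.length = σ ∧ f ∈ S ∧ g ∉ S := by
  have h1 : σ ∈ SRem S (alphaS S + 1) := by rw [← Sinf_fixed]; exact hσ
  rw [SRem_succ] at h1
  exact h1.2

lemma Sinf_empty_of_delta2 (hGδ : IsGδ S) (hFσ : IsFsigma S) : Sinf S = ∅ := by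
  by_contra hne
  rw [← Ne, ← Set.nonempty_iff_ne_empty] at hne
  obtain ⟨σ₀, hσ₀⟩ := hne
  set C : Set (ℕ → ℕ) := seqsIn (Sinf S) with hC
  have hCclosed : IsClosed C := isClosed_seqsIn _
  have hCne : C.Nonempty := by
    obtain ⟨f, _, hf, _⟩ := Sinf_extend hσ₀
    exact ⟨f, hf⟩
  -- density of S and Sᶜ within C
  have hdense : ∀ (T : Set (ℕ → ℕ)), (∀ σ ∈ Sinf S, ∃ f ∈ seqsIn (Sinf S) ∩ T,
      res f σ.length = σ) → Dense (Subtype.val ⁻¹' T : Set C) := by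
    intro T hT
    rw [dense_iff_inter_open]
    rintro U hU hUne
    rw [isOpen_induced_iff] at hU
    obtain ⟨V, hV, rfl⟩ := hU
    obtain ⟨⟨x, hxC⟩, hxV⟩ := hUne
    obtain ⟨t, ⟨y, n, rfl⟩, hxt, htV⟩ :=
      (PiNat.isTopologicalBasis_cylinders (fun _ : ℕ => ℕ)).exists_subset_of_mem_open hxV hV
    have hσ : res x n ∈ Sinf S := hxC n
    obtain ⟨f, ⟨hfC, hfT⟩, hfr⟩ := hT (res x n) hσ
    rw [res_length] at hfr
    have hfcyl : f ∈ PiNat.cylinder y n := by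
      intro i hi
      have h1 : f i = x i := res_eq_iff.mp hfr i hi
      rw [h1]
      exact hxt i hi
    exact ⟨⟨f, hfC⟩, htV hfcyl, hfT⟩
  have hd1 : Dense (Subtype.val ⁻¹' S : Set C) := by
    apply hdense
    intro σ hσ
    obtain ⟨f, _, hf, _, hfr, _, hfS, _⟩ := Sinf_extend hσ
    exact ⟨f, ⟨hf, hfS⟩, hfr⟩
  have hd2 : Dense (Subtype.val ⁻¹' Sᶜ : Set C) := by
    apply hdense
    intro σ hσ
    obtain ⟨_, g, _, hg, _, hgr, _, hgS⟩ := Sinf_extend hσ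
    exact ⟨g, ⟨hg, hgS⟩, hgr⟩
  have hg1 : IsGδ (Subtype.val ⁻¹' S : Set C) := isGδ_preimage hGδ continuous_subtype_val
  have hg2 : IsGδ (Subtype.val ⁻¹' Sᶜ : Set C) := by
    refine isGδ_preimage ?_ continuous_subtype_val
    exact isGδ_of_isFsigma_compl (by simpa using hFσ)
  haveI : CompleteSpace C := hCclosed.completeSpace_coe
  haveI : (uniformity C).IsCountablyGenerated := by
    have huc : uniformity C =
        Filter.comap (fun p : C × C => ((p.1 : ℕ → ℕ), (p.2 : ℕ → ℕ))) (uniformity _) := rfl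
    rw [huc]
    infer_instance
  haveI : BaireSpace C := inferInstance
  have hdd : Dense ((Subtype.val ⁻¹' S : Set C) ∩ (Subtype.val ⁻¹' Sᶜ : Set C)) :=
    hd1.inter_of_Gδ hg1 hg2 hd2
  haveI : Nonempty C := hCne.to_subtype
  obtain ⟨x, hx1, hx2⟩ := hdd.nonempty
  exact hx2 hx1

end Baire

theorem stmt6 (S : Set (ℕ → ℕ)) :
    (Guessable S ↔ Sinf S = ∅) ∧ ((IsGδ S ∧ IsFsigma S) ↔ Sinf S = ∅) := by
  constructor
  · constructor
    · intro h
      obtain ⟨h1, h2⟩ := delta2_of_guessable h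
      exact Sinf_empty_of_delta2 h1 h2
    · exact guessable_of_Sinf_empty
  · constructor
    · rintro ⟨h1, h2⟩
      exact Sinf_empty_of_delta2 h1 h2
    · intro h
      exact delta2_of_guessable (guessable_of_Sinf_empty h)
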